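/- Let n ≥ 2, λ > -n/2, μ a finite positive Borel measure on the unit sphere S^{n-1} ⊂ ℝⁿ, and u(x) = ∫_{S^{n-1}} (1-|x|²)^(1+2λ)/|x-ξ|^(n+2λ) dμ(ξ) for x in the open unit ball. Then for every unit vector ζ, the function r ↦ ((1-r)^(n-1)/(1+r)^(1+2λ)) · u(rζ) is monotone decreasing on [0,1). -/

import Mathlib

open MeasureTheory Real

theorem stmt8 (n : ℕ) (hn : 2 ≤ n) (l : ℝ) (hl : -(n / 2 : ℝ) < l)
    (μ : MeasureTheory.Measure (Metric.sphere (0 : EuclideanSpace ℝ (Fin n)) 1))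
    [MeasureTheory.IsFiniteMeasure μ]
    (u : EuclideanSpace ℝ (Fin n) → ℝ)
    (hu : ∀ x, ‖x‖ < 1 →
      u x = ∫ ξ, (1 - ‖x‖ ^ 2) ^ (1 + 2 * l) / ‖x - (ξ : EuclideanSpace ℝ (Fin n))‖ ^ ((n : ℝ) + 2 * l) ∂μ)
    (ζ : EuclideanSpace ℝ (Fin n)) (hζ : ‖ζ‖ = 1) :
    AntitoneOn (fun r : ℝ => (1 - r) ^ ((n : ℝ) - 1) / (1 + r) ^ (1 + 2 * l) * u (r • ζ))
      (Set.Ico (0:ℝ) 1) := by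
  have hn2 : (0:ℝ) < (n : ℝ) + 2 * l := by
    have h2 : (2:ℝ) ≤ (n:ℝ) := by exact_mod_cast hn
    have : -((n:ℝ)/2) < l := hl
    nlinarith
  -- norm facts
  have hξnorm : ∀ ξ : Metric.sphere (0 : EuclideanSpace ℝ (Fin n)) 1,
      ‖(ξ : EuclideanSpace ℝ (Fin n))‖ = 1 := fun ξ => by
    have := ξ.2
    simpa [mem_sphere_zero_iff_norm] using this
  have hnorm : ∀ a : ℝ, 0 ≤ a → ‖a • ζ‖ = a := fun a ha => by
    rw [norm_smul, hζ, mul_one, Real.norm_eq_abs, abs_of_nonneg ha]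
  have hB : ∀ a : ℝ, 0 ≤ a → a < 1 →
      ∀ ξ : Metric.sphere (0 : EuclideanSpace ℝ (Fin n)) 1,
      1 - a ≤ ‖a • ζ - (ξ : EuclideanSpace ℝ (Fin n))‖ := by
    intro a ha0 ha1 ξ
    have h1 := norm_sub_norm_le ((ξ : EuclideanSpace ℝ (Fin n))) (a • ζ)
    rw [hξnorm ξ, hnorm a ha0, norm_sub_rev] at h1
    linarith
  -- squared-norm formula
  have hBsq : ∀ a : ℝ, 0 ≤ a →
      ∀ ξ : Metric.sphere (0 : EuclideanSpace ℝ (Fin n)) 1,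
      ‖a • ζ - (ξ : EuclideanSpace ℝ (Fin n))‖ ^ 2
        = a ^ 2 - 2 * a * (inner ℝ ζ (ξ : EuclideanSpace ℝ (Fin n)) : ℝ) + 1 := by
    intro a ha0 ξ
    rw [norm_sub_sq_real, real_inner_smul_left, hnorm a ha0, hξnorm ξ]
    ring
  -- key pointwise identity
  have hkey : ∀ a : ℝ, 0 ≤ a → a < 1 →
      ∀ ξ : Metric.sphere (0 : EuclideanSpace ℝ (Fin n)) 1,
      (1 - a) ^ ((n : ℝ) - 1) / (1 + a) ^ (1 + 2 * l) *
          ((1 - a ^ 2) ^ (1 + 2 * l) / ‖a • ζ - (ξ : EuclideanSpace ℝ (Fin n))‖ ^ ((n : ℝ) + 2 * l))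
        = ((1 - a) / ‖a • ζ - (ξ : EuclideanSpace ℝ (Fin n))‖) ^ ((n : ℝ) + 2 * l) := by
    intro a ha0 ha1 ξ
    have h1 : (0:ℝ) < 1 - a := by linarith
    have h2 : (0:ℝ) < 1 + a := by linarith
    have hBpos : 0 < ‖a • ζ - (ξ : EuclideanSpace ℝ (Fin n))‖ := lt_of_lt_of_le h1 (hB a ha0 ha1 ξ)
    have hsq : 1 - a ^ 2 = (1 - a) * (1 + a) := by ring
    rw [hsq, Real.mul_rpow h1.le h2.le, Real.div_rpow h1.le hBpos.le]
    have e2 : (1 - a) ^ ((n : ℝ) + 2 * l) = (1 - a) ^ ((n : ℝ) - 1) * (1 - a) ^ (1 + 2 * l) := by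
      rw [← Real.rpow_add h1]; congr 1; ring
    rw [e2]
    have hp : (1 + a) ^ (1 + 2 * l) ≠ 0 := (Real.rpow_pos_of_pos h2 _).ne'
    have hBp : ‖a • ζ - (ξ : EuclideanSpace ℝ (Fin n))‖ ^ ((n : ℝ) + 2 * l) ≠ 0 :=
      (Real.rpow_pos_of_pos hBpos _).ne'
    field_simp
  -- main monotonicity
  intro r hr s hs hrs
  obtain ⟨hr0, hr1⟩ := hr
  obtain ⟨hs0, hs1⟩ := hs
  simp only
  rw [hu _ (by rw [hnorm s hs0]; exact hs1), hu _ (by rw [hnorm r hr0]; exact hr1),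
    hnorm r hr0, hnorm s hs0, ← MeasureTheory.integral_const_mul, ← MeasureTheory.integral_const_mul]
  -- base inequality
  have hbase : ∀ ξ : Metric.sphere (0 : EuclideanSpace ℝ (Fin n)) 1,
      (1 - s) / ‖s • ζ - (ξ : EuclideanSpace ℝ (Fin n))‖
        ≤ (1 - r) / ‖r • ζ - (ξ : EuclideanSpace ℝ (Fin n))‖ := by
    intro ξ
    have hBr : 0 < ‖r • ζ - (ξ : EuclideanSpace ℝ (Fin n))‖ :=
      lt_of_lt_of_le (by linarith) (hB r hr0 hr1 ξ)
    have hBs : 0 < ‖s • ζ - (ξ : EuclideanSpace ℝ (Fin n))‖ :=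
      lt_of_lt_of_le (by linarith) (hB s hs0 hs1 ξ)
    rw [div_le_div_iff₀ hBs hBr]
    set t : ℝ := (inner ℝ ζ (ξ : EuclideanSpace ℝ (Fin n)) : ℝ) with ht
    have htle : t ≤ 1 := by
      have := real_inner_le_norm ζ (ξ : EuclideanSpace ℝ (Fin n))
      rw [hζ, hξnorm ξ, one_mul] at this
      exact this
    have hsqle : ((1 - s) * ‖r • ζ - (ξ : EuclideanSpace ℝ (Fin n))‖) ^ 2
        ≤ ((1 - r) * ‖s • ζ - (ξ : EuclideanSpace ℝ (Fin n))‖) ^ 2 := by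
      rw [mul_pow, mul_pow, hBsq r hr0 ξ, hBsq s hs0 ξ, ← ht]
      nlinarith [mul_nonneg (mul_nonneg (sub_nonneg.2 hrs) (sub_nonneg.2 htle))
        (sub_nonneg.2 (by nlinarith : r * s ≤ 1))]
    have := abs_le_of_sq_le_sq' hsqle
      (mul_nonneg (by linarith) hBs.le)
    exact (this).2
  -- pointwise inequality between integrands
  have hpt : ∀ ξ : Metric.sphere (0 : EuclideanSpace ℝ (Fin n)) 1,
      (1 - s) ^ ((n : ℝ) - 1) / (1 + s) ^ (1 + 2 * l) *
          ((1 - s ^ 2) ^ (1 + 2 * l) / ‖s • ζ - (ξ : EuclideanSpace ℝ (Fin n))‖ ^ ((n : ℝ) + 2 * l))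
        ≤ (1 - r) ^ ((n : ℝ) - 1) / (1 + r) ^ (1 + 2 * l) *
          ((1 - r ^ 2) ^ (1 + 2 * l) / ‖r • ζ - (ξ : EuclideanSpace ℝ (Fin n))‖ ^ ((n : ℝ) + 2 * l)) := by
    intro ξ
    rw [hkey r hr0 hr1 ξ, hkey s hs0 hs1 ξ]
    have hBs : 0 < ‖s • ζ - (ξ : EuclideanSpace ℝ (Fin n))‖ :=
      lt_of_lt_of_le (by linarith) (hB s hs0 hs1 ξ)
    exact Real.rpow_le_rpow (div_nonneg (by linarith) hBs.le) (hbase ξ) hn2.le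
  -- integrability
  have hint : ∀ a : ℝ, 0 ≤ a → a < 1 →
      MeasureTheory.Integrable (fun ξ : Metric.sphere (0 : EuclideanSpace ℝ (Fin n)) 1 =>
        (1 - a) ^ ((n : ℝ) - 1) / (1 + a) ^ (1 + 2 * l) *
          ((1 - a ^ 2) ^ (1 + 2 * l) / ‖a • ζ - (ξ : EuclideanSpace ℝ (Fin n))‖ ^ ((n : ℝ) + 2 * l))) μ := by
    intro a ha0 ha1
    have hcont : Continuous (fun ξ : Metric.sphere (0 : EuclideanSpace ℝ (Fin n)) 1 =>
        (1 - a) ^ ((n : ℝ) - 1) / (1 + a) ^ (1 + 2 * l) *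
          ((1 - a ^ 2) ^ (1 + 2 * l) / ‖a • ζ - (ξ : EuclideanSpace ℝ (Fin n))‖ ^ ((n : ℝ) + 2 * l))) := by
      apply Continuous.mul continuous_const
      apply Continuous.div continuous_const
      · apply Continuous.rpow_const
        · exact (continuous_const.sub continuous_subtype_val).norm
        · intro ξ
          right
          exact hn2.le
      · intro ξ
        have hBpos : 0 < ‖a • ζ - (ξ : EuclideanSpace ℝ (Fin n))‖ :=
          lt_of_lt_of_le (by linarith) (hB a ha0 ha1 ξ)
        exact (Real.rpow_pos_of_pos hBpos _).ne'
    exact hcont.integrable_of_hasCompactSupport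
      ((isClosed_tsupport _).isCompact)
  exact MeasureTheory.integral_mono (hint s hs0 hs1) (hint r hr0 hr1) hpt
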